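/- In the independent-set reduction profile, swapping along a selected independent set yields an exchange-stable matching: given a graph H on vertices v_1,...,v_n and an independent set {v_{j_1},...,v_{j_h}} of size h, the matching M obtained from the initial matching M_0 = {{s_z,t_z} : z ∈ [h]} ∪ {{w_i,u_i},{y_i,x_i} : i ∈ [n]} by setting, for each z ∈ [h], M(s_z)=w_{j_z}, M(t_z)=x_{j_z}, M(u_{j_z})=y_{j_z} (and keeping all other pairs of M_0), is a perfect exchange-stable matching of the constructed bipartite profile. -/
import Mathlib


/-- The agents of the independent-set reduction profile:
`U = {s_z, u_i, x_i}` and `W = {t_z, w_i, y_i}`. -/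
inductive RAg (n h : ℕ)
  | s (z : Fin h) | t (z : Fin h) | u (i : Fin n) | x (i : Fin n) | w (i : Fin n) | y (i : Fin n)
deriving DecidableEq

/-- Rank of a potential partner in an agent's preference list in the reduction
profile built from the graph `Hg` (smaller = preferred; `2n + 2h + 2` =
unacceptable).  Preferences:
`s_j: w_1 ≻ … ≻ w_n ≻ t_j`; `t_j: u_1 ≻ … ≻ u_n ≻ x_1 ≻ … ≻ x_n ≻ s_j`;
`x_i: t_1 ≻ … ≻ t_h ≻ y_i`; `y_i: u_i ≻ x_i ≻ [U(v_i)]`;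
`u_i: w_i ≻ [Y(v_i)] ≻ y_i ≻ t_1 ≻ … ≻ t_h`; `w_i: s_1 ≻ … ≻ s_h ≻ u_i`,
where `U(v_i)`/`Y(v_i)` are the `u`/`y` agents of neighbours of `v_i` in `Hg`,
ordered ascendingly by index. -/
def rrank {n h : ℕ} (Hg : SimpleGraph (Fin n)) [DecidableRel Hg.Adj] :
    RAg n h → RAg n h → ℕ
  | .s _, .w i => (i : ℕ)
  | .s z, .t z' => if z = z' then n else 2 * n + 2 * h + 2
  | .t _, .u i => (i : ℕ)
  | .t _, .x i => n + (i : ℕ)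
  | .t z, .s z' => if z = z' then 2 * n else 2 * n + 2 * h + 2
  | .x _, .t z => (z : ℕ)
  | .x i, .y i' => if i = i' then h else 2 * n + 2 * h + 2
  | .y i, .u i' =>
      if i = i' then 0 else if Hg.Adj i i' then 2 + (i' : ℕ) else 2 * n + 2 * h + 2
  | .y i, .x i' => if i = i' then 1 else 2 * n + 2 * h + 2
  | .u i, .w i' => if i = i' then 0 else 2 * n + 2 * h + 2
  | .u i, .y i' =>
      if i = i' then n + 1 else if Hg.Adj i i' then 1 + (i' : ℕ) else 2 * n + 2 * h + 2
  | .u _, .t z => n + 2 + (z : ℕ)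
  | .w _, .s z => (z : ℕ)
  | .w i, .u i' => if i = i' then h else 2 * n + 2 * h + 2
  | _, _ => 2 * n + 2 * h + 2

/-- given an independent set `{v_{j 1}, …, v_{j h}}` of the graph
`Hg`, the matching obtained from the initial matching by swapping along the
independent set (i.e. `M(s_z) = w_{j z}`, `M(t_z) = x_{j z}`,
`M(u_{j z}) = y_{j z}`, all other agents matched as initially) is a perfect
exchange-stable matching of the reduction profile. -/
theorem stmt_19 (n h : ℕ) (Hg : SimpleGraph (Fin n)) [DecidableRel Hg.Adj]
    (j : Fin h → Fin n) (hjinj : Function.Injective j)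
    (hind : ∀ z z', ¬ Hg.Adj (j z) (j z'))
    (M : RAg n h → RAg n h)
    (hMs : ∀ z, M (.s z) = .w (j z)) (hMw1 : ∀ z, M (.w (j z)) = .s z)
    (hMt : ∀ z, M (.t z) = .x (j z)) (hMx1 : ∀ z, M (.x (j z)) = .t z)
    (hMu1 : ∀ z, M (.u (j z)) = .y (j z)) (hMy1 : ∀ z, M (.y (j z)) = .u (j z))
    (hMw2 : ∀ i, (∀ z, j z ≠ i) → M (.w i) = .u i ∧ M (.u i) = .w i)
    (hMy2 : ∀ i, (∀ z, j z ≠ i) → M (.y i) = .x i ∧ M (.x i) = .y i) :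
    (∀ a, M (M a) = a) ∧ (∀ a, M a ≠ a) ∧
      ¬ ∃ a b : RAg n h, a ≠ b ∧
          rrank Hg a (M b) < rrank Hg a (M a) ∧
          rrank Hg b (M a) < rrank Hg b (M b) := by

  have hinv : ∀ a, M (M a) = a := by
    intro a
    cases a with
    | s z => rw [hMs, hMw1]
    | t z => rw [hMt, hMx1]
    | u i =>
      by_cases hi : ∃ z, j z = i
      · obtain ⟨z, rfl⟩ := hi; rw [hMu1, hMy1]
      · push_neg at hi; rw [(hMw2 i hi).2, (hMw2 i hi).1]
    | x i =>
      by_cases hi : ∃ z, j z = i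
      · obtain ⟨z, rfl⟩ := hi; rw [hMx1, hMt]
      · push_neg at hi; rw [(hMy2 i hi).2, (hMy2 i hi).1]
    | w i =>
      by_cases hi : ∃ z, j z = i
      · obtain ⟨z, rfl⟩ := hi; rw [hMw1, hMs]
      · push_neg at hi; rw [(hMw2 i hi).1, (hMw2 i hi).2]
    | y i =>
      by_cases hi : ∃ z, j z = i
      · obtain ⟨z, rfl⟩ := hi; rw [hMy1, hMu1]
      · push_neg at hi; rw [(hMy2 i hi).1, (hMy2 i hi).2]
  refine ⟨hinv, ?_, ?_⟩
  · intro a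
    cases a with
    | s z => rw [hMs]; simp
    | t z => rw [hMt]; simp
    | u i =>
      by_cases hi : ∃ z, j z = i
      · obtain ⟨z, rfl⟩ := hi; rw [hMu1]; simp
      · push_neg at hi; rw [(hMw2 i hi).2]; simp
    | x i =>
      by_cases hi : ∃ z, j z = i
      · obtain ⟨z, rfl⟩ := hi; rw [hMx1]; simp
      · push_neg at hi; rw [(hMy2 i hi).2]; simp
    | w i =>
      by_cases hi : ∃ z, j z = i
      · obtain ⟨z, rfl⟩ := hi; rw [hMw1]; simp
      · push_neg at hi; rw [(hMw2 i hi).1]; simp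
    | y i =>
      by_cases hi : ∃ z, j z = i
      · obtain ⟨z, rfl⟩ := hi; rw [hMy1]; simp
      · push_neg at hi; rw [(hMy2 i hi).1]; simp
  · rintro ⟨a, b, hab, h1, h2⟩
    have hb : b = M (M b) := (hinv b).symm
    cases a with
    | s z =>
      rw [hMs] at h1 h2
      cases hc : M b with
      | w i' =>
        rw [hc] at h1
        rw [hc] at hb
        by_cases hi' : ∃ z', j z' = i'
        · obtain ⟨z', rfl⟩ := hi'
          rw [hMw1] at hb; subst hb
          rw [hc] at h2
          simp only [rrank] at h1 h2
          omega
        · push_neg at hi'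
          rw [(hMw2 i' hi').1] at hb; subst hb
          rw [hc] at h2
          simp only [rrank] at h1 h2
          split_ifs at h1 h2 <;> omega
      | t z' =>
        rw [hc] at h1
        simp only [rrank] at h1
        split_ifs at h1 <;> omega
      | s z' => rw [hc] at h1; simp only [rrank] at h1; omega
      | u i' => rw [hc] at h1; simp only [rrank] at h1; omega
      | x i' => rw [hc] at h1; simp only [rrank] at h1; omega
      | y i' => rw [hc] at h1; simp only [rrank] at h1; omega
    | t z =>
      rw [hMt] at h1 h2
      cases hc : M b with
      | u i' =>
        rw [hc] at h1 hb
        by_cases hi' : ∃ z', j z' = i'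
        · obtain ⟨z', rfl⟩ := hi'
          rw [hMu1] at hb; subst hb
          rw [hc] at h2
          simp only [rrank] at h1 h2
          split_ifs at h2 <;> omega
        · push_neg at hi'
          rw [(hMw2 i' hi').2] at hb; subst hb
          rw [hc] at h2
          simp only [rrank] at h1 h2
          split_ifs at h1 h2 <;> omega
      | x i' =>
        rw [hc] at h1 hb
        by_cases hi' : ∃ z', j z' = i'
        · obtain ⟨z', rfl⟩ := hi'
          rw [hMx1] at hb; subst hb
          rw [hc] at h2
          simp only [rrank] at h1 h2
          omega
        · push_neg at hi'
          rw [(hMy2 i' hi').2] at hb; subst hb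
          rw [hc] at h2
          simp only [rrank] at h1 h2
          split_ifs at h1 h2 <;> omega
      | s z' =>
        rw [hc] at h1; simp only [rrank] at h1
        split_ifs at h1 <;> omega
      | t z' => rw [hc] at h1; simp only [rrank] at h1; omega
      | w i' => rw [hc] at h1; simp only [rrank] at h1; omega
      | y i' => rw [hc] at h1; simp only [rrank] at h1; omega
    | u i =>
      by_cases hi : ∃ z, j z = i
      · obtain ⟨z, rfl⟩ := hi
        rw [hMu1] at h1 h2
        cases hc : M b with
        | w i' =>
          rw [hc] at h1 hb
          by_cases hi' : ∃ z', j z' = i'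
          · obtain ⟨z', rfl⟩ := hi'
            rw [hMw1] at hb; subst hb
            rw [hc] at h2
            simp only [rrank] at h1 h2
            split_ifs at h1 h2 <;> omega
          · push_neg at hi'
            rw [(hMw2 i' hi').1] at hb; subst hb
            rw [hc] at h2
            simp only [rrank] at h1 h2
            split_ifs at h1 h2 <;> omega
        | y i' =>
          rw [hc] at h1 hb
          by_cases hi' : ∃ z', j z' = i'
          · obtain ⟨z', rfl⟩ := hi'
            rw [hMy1] at hb; subst hb
            rw [hc] at h2
            simp only [rrank] at h1 h2
            split_ifs at h1 h2 <;> first | omega | exact absurd ‹Hg.Adj _ _› (hind _ _)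
          · push_neg at hi'
            rw [(hMy2 i' hi').1] at hb; subst hb
            rw [hc] at h2
            simp only [rrank] at h1 h2
            split_ifs at h1 h2 <;> omega
        | t z' =>
          rw [hc] at h1; simp only [rrank] at h1
          split_ifs at h1 <;> omega
        | s z' => rw [hc] at h1; simp only [rrank] at h1; split_ifs at h1 <;> omega
        | u i' => rw [hc] at h1; simp only [rrank] at h1; split_ifs at h1 <;> omega
        | x i' => rw [hc] at h1; simp only [rrank] at h1; split_ifs at h1 <;> omega
      · push_neg at hi
        rw [(hMw2 i hi).2] at h1
        have h0 : rrank Hg (RAg.u i : RAg n h) (RAg.w i) = 0 := by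
          simp [rrank]
        rw [h0] at h1
        omega
    | x i =>
      by_cases hi : ∃ z, j z = i
      · obtain ⟨z, rfl⟩ := hi
        rw [hMx1] at h1 h2
        cases hc : M b with
        | t z' =>
          rw [hc] at h1 hb
          rw [hMt] at hb; subst hb
          rw [hc] at h2
          simp only [rrank] at h1 h2
          omega
        | y i' =>
          rw [hc] at h1; simp only [rrank] at h1
          split_ifs at h1 <;> omega
        | s z' => rw [hc] at h1; simp only [rrank] at h1; omega
        | u i' => rw [hc] at h1; simp only [rrank] at h1; omega
        | x i' => rw [hc] at h1; simp only [rrank] at h1; omega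
        | w i' => rw [hc] at h1; simp only [rrank] at h1; omega
      · push_neg at hi
        rw [(hMy2 i hi).2] at h1 h2
        cases hc : M b with
        | t z' =>
          rw [hc] at h1 hb
          rw [hMt] at hb; subst hb
          rw [hc] at h2
          simp only [rrank] at h1 h2
          split_ifs at h1 h2 <;> omega
        | y i' =>
          rw [hc] at h1; simp only [rrank] at h1
          split_ifs at h1 <;> omega
        | s z' => rw [hc] at h1; simp only [rrank] at h1; split_ifs at h1 <;> omega
        | u i' => rw [hc] at h1; simp only [rrank] at h1; split_ifs at h1 <;> omega
        | x i' => rw [hc] at h1; simp only [rrank] at h1; split_ifs at h1 <;> omega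
        | w i' => rw [hc] at h1; simp only [rrank] at h1; split_ifs at h1 <;> omega
    | w i =>
      by_cases hi : ∃ z, j z = i
      · obtain ⟨z, rfl⟩ := hi
        rw [hMw1] at h1 h2
        cases hc : M b with
        | s z' =>
          rw [hc] at h1 hb
          rw [hMs] at hb; subst hb
          rw [hc] at h2
          simp only [rrank] at h1 h2
          omega
        | u i' =>
          rw [hc] at h1; simp only [rrank] at h1
          split_ifs at h1 <;> omega
        | t z' => rw [hc] at h1; simp only [rrank] at h1; omega
        | x i' => rw [hc] at h1; simp only [rrank] at h1; omega
        | w i' => rw [hc] at h1; simp only [rrank] at h1; omega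
        | y i' => rw [hc] at h1; simp only [rrank] at h1; omega
      · push_neg at hi
        rw [(hMw2 i hi).1] at h1 h2
        cases hc : M b with
        | s z' =>
          rw [hc] at h1 hb
          rw [hMs] at hb; subst hb
          rw [hc] at h2
          simp only [rrank] at h1 h2
          split_ifs at h1 h2 <;> omega
        | u i' =>
          rw [hc] at h1; simp only [rrank] at h1
          split_ifs at h1 <;> omega
        | t z' => rw [hc] at h1; simp only [rrank] at h1; split_ifs at h1 <;> omega
        | x i' => rw [hc] at h1; simp only [rrank] at h1; split_ifs at h1 <;> omega
        | w i' => rw [hc] at h1; simp only [rrank] at h1; split_ifs at h1 <;> omega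
        | y i' => rw [hc] at h1; simp only [rrank] at h1; split_ifs at h1 <;> omega
    | y i =>
      by_cases hi : ∃ z, j z = i
      · obtain ⟨z, rfl⟩ := hi
        rw [hMy1] at h1
        have h0 : rrank Hg (RAg.y (j z) : RAg n h) (RAg.u (j z)) = 0 := by
          simp [rrank]
        rw [h0] at h1
        omega
      · push_neg at hi
        rw [(hMy2 i hi).1] at h1 h2
        cases hc : M b with
        | u i' =>
          rw [hc] at h1 hb
          by_cases hi' : ∃ z', j z' = i'
          · obtain ⟨z', rfl⟩ := hi'
            rw [hMu1] at hb; subst hb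
            rw [hc] at h2
            simp only [rrank] at h1 h2
            split_ifs at h1 h2 <;> omega
          · push_neg at hi'
            rw [(hMw2 i' hi').2] at hb; subst hb
            rw [hc] at h2
            simp only [rrank] at h1 h2
            split_ifs at h1 h2 <;> omega
        | x i' =>
          rw [hc] at h1; simp only [rrank] at h1
          split_ifs at h1 <;> omega
        | s z' => rw [hc] at h1; simp only [rrank] at h1; split_ifs at h1 <;> omega
        | t z' => rw [hc] at h1; simp only [rrank] at h1; split_ifs at h1 <;> omega
        | w i' => rw [hc] at h1; simp only [rrank] at h1; split_ifs at h1 <;> omega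
        | y i' => rw [hc] at h1; simp only [rrank] at h1; split_ifs at h1 <;> omega
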